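/- Let Σ_η be a real symmetric positive definite p×p matrix, Σ_ω a real symmetric positive definite n×n matrix, Ĉ a real symmetric positive definite n×n matrix, α ∈ (0,1], and Ĝ a real p×n matrix such that Ĝᵀ Σ_η⁻¹ Ĝ is positive definite and ‖Ĝ‖₂ ≤ H for some H > 0. If the vector r̂ ∈ ℝⁿ satisfies (Ĝᵀ Σ_η⁻¹ Ĝ + (1 − α)(α² Ĉ + Σ_ω)⁻¹) r̂ = Ĝᵀ Σ_η⁻¹ y for a vector y ∈ ℝᵖ, then ‖r̂‖₂ ≤ H · ‖(Ĝᵀ Σ_η⁻¹ Ĝ)⁻¹‖₂ · ‖Σ_η⁻¹ y‖₂. -/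

import Mathlib

open Matrix

/-- The spectral norm of a real matrix: the operator norm induced by the
Euclidean norms on the domain and codomain. -/
noncomputable def specNorm {m n : ℕ} (A : Matrix (Fin m) (Fin n) ℝ) : ℝ :=
  ‖LinearMap.toContinuousLinearMap (Matrix.toEuclideanLin A)‖

/-- The Euclidean norm of a real vector. -/
noncomputable def eucNorm {n : ℕ} (v : Fin n → ℝ) : ℝ :=
  ‖(EuclideanSpace.equiv (Fin n) ℝ).symm v‖

open scoped Matrix.Norms.L2Operator in
lemma specNorm_eq {m n : ℕ} (A : Matrix (Fin m) (Fin n) ℝ) : specNorm A = ‖A‖ := rfl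

lemma eucNorm_nonneg {n : ℕ} (v : Fin n → ℝ) : 0 ≤ eucNorm v := norm_nonneg _

lemma specNorm_nonneg {m n : ℕ} (A : Matrix (Fin m) (Fin n) ℝ) : 0 ≤ specNorm A :=
  norm_nonneg _

lemma eucNorm_mulVec_le {m n : ℕ} (A : Matrix (Fin m) (Fin n) ℝ) (v : Fin n → ℝ) :
    eucNorm (A *ᵥ v) ≤ specNorm A * eucNorm v :=
  (LinearMap.toContinuousLinearMap (Matrix.toEuclideanLin A)).le_opNorm
    ((EuclideanSpace.equiv (Fin n) ℝ).symm v)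

lemma dotProduct_le {n : ℕ} (u w : Fin n → ℝ) : u ⬝ᵥ w ≤ eucNorm u * eucNorm w := by
  have h := real_inner_le_norm ((EuclideanSpace.equiv (Fin n) ℝ).symm u)
    ((EuclideanSpace.equiv (Fin n) ℝ).symm w)
  have : (inner ℝ ((EuclideanSpace.equiv (Fin n) ℝ).symm u)
      ((EuclideanSpace.equiv (Fin n) ℝ).symm w) : ℝ) = u ⬝ᵥ w := by
    simp [PiLp.inner_apply, dotProduct, mul_comm]
  rw [this] at h
  exact h

lemma eucNorm_sq {n : ℕ} (v : Fin n → ℝ) : eucNorm v ^ 2 = v ⬝ᵥ v := by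
  have h := real_inner_self_eq_norm_sq ((EuclideanSpace.equiv (Fin n) ℝ).symm v)
  have h2 : (inner ℝ ((EuclideanSpace.equiv (Fin n) ℝ).symm v)
      ((EuclideanSpace.equiv (Fin n) ℝ).symm v) : ℝ) = v ⬝ᵥ v := by
    simp only [PiLp.inner_apply]
    simp [dotProduct, sq]
  rw [h2] at h
  rw [eucNorm, ← h]

theorem stmt_8 {p n : ℕ} (Sη : Matrix (Fin p) (Fin p) ℝ) (hSη : Sη.PosDef)
    (Sω : Matrix (Fin n) (Fin n) ℝ) (hSω : Sω.PosDef)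
    (Chat : Matrix (Fin n) (Fin n) ℝ) (hChat : Chat.PosDef)
    (α : ℝ) (hα0 : 0 < α) (hα1 : α ≤ 1)
    (Ghat : Matrix (Fin p) (Fin n) ℝ) (hGhatPD : (Ghatᵀ * Sη⁻¹ * Ghat).PosDef)
    (H : ℝ) (hH : 0 < H) (hGhat : specNorm Ghat ≤ H)
    (rhat : Fin n → ℝ) (y : Fin p → ℝ)
    (heq : (Ghatᵀ * Sη⁻¹ * Ghat + (1 - α) • (α ^ 2 • Chat + Sω)⁻¹) *ᵥ rhat =
      (Ghatᵀ * Sη⁻¹) *ᵥ y) :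
    eucNorm rhat ≤ H * specNorm (Ghatᵀ * Sη⁻¹ * Ghat)⁻¹ * eucNorm (Sη⁻¹ *ᵥ y) := by
  set M : Matrix (Fin n) (Fin n) ℝ := Ghatᵀ * Sη⁻¹ * Ghat with hMdef
  set X : Matrix (Fin n) (Fin n) ℝ := α ^ 2 • Chat + Sω with hXdef
  -- X is positive definite
  have hX : X.PosDef := by
    refine Matrix.PosDef.of_dotProduct_mulVec_pos ?_ ?_
    · show Xᴴ = X
      rw [hXdef, conjTranspose_add, conjTranspose_smul, star_trivial, hChat.1, hSω.1]
    · intro x hx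
      have h1 : 0 < star x ⬝ᵥ (Chat *ᵥ x) := hChat.dotProduct_mulVec_pos hx
      have h2 : 0 < star x ⬝ᵥ (Sω *ᵥ x) := hSω.dotProduct_mulVec_pos hx
      have hα2 : 0 < α ^ 2 := by positivity
      simp only [hXdef, add_mulVec, smul_mulVec, dotProduct_add, dotProduct_smul,
        smul_eq_mul]
      nlinarith
  have hXinv : (X⁻¹).PosSemidef := hX.inv.posSemidef
  -- quadratic form of the regularizer is nonnegative
  have hNreg : 0 ≤ rhat ⬝ᵥ (((1 - α) • X⁻¹) *ᵥ rhat) := by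
    have := hXinv.dotProduct_mulVec_nonneg rhat
    simp only [star_trivial] at this
    have h1α : 0 ≤ 1 - α := by linarith
    simp only [smul_mulVec, dotProduct_smul, smul_eq_mul]
    exact mul_nonneg h1α this
  -- step 1: quadratic form bound
  have hquad : rhat ⬝ᵥ (M *ᵥ rhat) ≤ H * eucNorm rhat * eucNorm (Sη⁻¹ *ᵥ y) := by
    have h1 : rhat ⬝ᵥ (M *ᵥ rhat) ≤ rhat ⬝ᵥ ((Ghatᵀ * Sη⁻¹) *ᵥ y) := by
      rw [← heq, add_mulVec, dotProduct_add]
      linarith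
    have h2 : rhat ⬝ᵥ ((Ghatᵀ * Sη⁻¹) *ᵥ y) = (Ghat *ᵥ rhat) ⬝ᵥ (Sη⁻¹ *ᵥ y) := by
      rw [← mulVec_mulVec, dotProduct_mulVec, vecMul_transpose]
    have h3 : (Ghat *ᵥ rhat) ⬝ᵥ (Sη⁻¹ *ᵥ y) ≤ eucNorm (Ghat *ᵥ rhat) * eucNorm (Sη⁻¹ *ᵥ y) :=
      dotProduct_le _ _
    have h4 : eucNorm (Ghat *ᵥ rhat) ≤ specNorm Ghat * eucNorm rhat :=
      eucNorm_mulVec_le _ _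
    have h5 : specNorm Ghat * eucNorm rhat ≤ H * eucNorm rhat :=
      mul_le_mul_of_nonneg_right hGhat (eucNorm_nonneg _)
    calc rhat ⬝ᵥ (M *ᵥ rhat) ≤ (Ghat *ᵥ rhat) ⬝ᵥ (Sη⁻¹ *ᵥ y) := h1.trans_eq h2
      _ ≤ eucNorm (Ghat *ᵥ rhat) * eucNorm (Sη⁻¹ *ᵥ y) := h3
      _ ≤ H * eucNorm rhat * eucNorm (Sη⁻¹ *ᵥ y) :=
        mul_le_mul_of_nonneg_right (h4.trans h5) (eucNorm_nonneg _)
  -- square root of M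
  have hMps : M.PosSemidef := hGhatPD.posSemidef
  obtain ⟨S, hSsa, -, hSS'⟩ := CFC.exists_sqrt_of_isSelfAdjoint_of_quasispectrumRestricts hMps.1
    (by open scoped MatrixOrder in exact QuasispectrumRestricts.nnreal_of_nonneg hMps.nonneg)
  have hSS : S * S = M := hSS'
  have hSsym : Sᵀ = S := by
    have := hSsa.star_eq; rwa [star_eq_conjTranspose, conjTranspose_eq_transpose_of_trivial] at this
  have hMinvM : M⁻¹ * M = 1 := nonsing_inv_mul M (isUnit_iff_ne_zero.mpr hGhatPD.det_pos.ne')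
  have hMMinv : M * M⁻¹ = 1 := mul_nonsing_inv M (isUnit_iff_ne_zero.mpr hGhatPD.det_pos.ne')
  have hMinvsym : (M⁻¹)ᵀ = M⁻¹ := hGhatPD.1.inv
  have hSM : S * M = M * S := by rw [← hSS, mul_assoc]
  have hcomm : M⁻¹ * S = S * M⁻¹ := by
    calc M⁻¹ * S = M⁻¹ * S * (M * M⁻¹) := by rw [hMMinv, mul_one]
      _ = M⁻¹ * (S * M) * M⁻¹ := by noncomm_ring
      _ = M⁻¹ * (M * S) * M⁻¹ := by rw [hSM]
      _ = (M⁻¹ * M) * (S * M⁻¹) := by noncomm_ring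
      _ = S * M⁻¹ := by rw [hMinvM, one_mul]
  have hSMS : S * M⁻¹ * S = 1 := by
    calc S * M⁻¹ * S = M⁻¹ * S * S := by rw [← hcomm]
      _ = M⁻¹ * (S * S) := by rw [mul_assoc]
      _ = M⁻¹ * M := by rw [hSS]
      _ = 1 := hMinvM
  set u : Fin n → ℝ := S *ᵥ rhat with hudef
  -- ‖u‖² = quadratic form
  have hu2 : u ⬝ᵥ u = rhat ⬝ᵥ (M *ᵥ rhat) := by
    show (S *ᵥ rhat) ⬝ᵥ (S *ᵥ rhat) = _
    rw [dotProduct_mulVec, ← mulVec_transpose, hSsym, mulVec_mulVec, hSS, dotProduct_comm]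
  -- ‖rhat‖² = u ⬝ᵥ (M⁻¹ u)
  have hr2 : rhat ⬝ᵥ rhat = u ⬝ᵥ (M⁻¹ *ᵥ u) := by
    symm
    show (S *ᵥ rhat) ⬝ᵥ (M⁻¹ *ᵥ (S *ᵥ rhat)) = _
    rw [mulVec_mulVec, dotProduct_mulVec, ← mulVec_transpose, transpose_mul, hSsym, hMinvsym,
      mulVec_mulVec, hSMS, one_mulVec]
  -- combine
  have key : eucNorm rhat ^ 2 ≤ specNorm M⁻¹ * (H * eucNorm rhat * eucNorm (Sη⁻¹ *ᵥ y)) := by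
    have h1 : eucNorm rhat ^ 2 = u ⬝ᵥ (M⁻¹ *ᵥ u) := by rw [eucNorm_sq, hr2]
    have h2 : u ⬝ᵥ (M⁻¹ *ᵥ u) ≤ eucNorm u * eucNorm (M⁻¹ *ᵥ u) := dotProduct_le _ _
    have h3 : eucNorm (M⁻¹ *ᵥ u) ≤ specNorm M⁻¹ * eucNorm u := eucNorm_mulVec_le _ _
    have h4 : eucNorm u * eucNorm (M⁻¹ *ᵥ u) ≤ specNorm M⁻¹ * (eucNorm u * eucNorm u) := by
      nlinarith [eucNorm_nonneg u]
    have h5 : eucNorm u * eucNorm u = rhat ⬝ᵥ (M *ᵥ rhat) := by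
      rw [← hu2, ← eucNorm_sq u]; ring
    rw [h1]
    calc u ⬝ᵥ (M⁻¹ *ᵥ u) ≤ specNorm M⁻¹ * (eucNorm u * eucNorm u) := h2.trans h4
      _ = specNorm M⁻¹ * (rhat ⬝ᵥ (M *ᵥ rhat)) := by rw [h5]
      _ ≤ specNorm M⁻¹ * (H * eucNorm rhat * eucNorm (Sη⁻¹ *ᵥ y)) :=
        mul_le_mul_of_nonneg_left hquad (specNorm_nonneg _)
  rcases eq_or_lt_of_le (eucNorm_nonneg rhat) with h0 | h0
  · rw [← h0]
    exact mul_nonneg (mul_nonneg hH.le (specNorm_nonneg _)) (eucNorm_nonneg _)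
  · have := key
    rw [pow_two] at this
    have h6 : eucNorm rhat ≤ specNorm M⁻¹ * (H * eucNorm (Sη⁻¹ *ᵥ y)) := by
      rw [← mul_le_mul_iff_left₀ h0]
      nlinarith
    calc eucNorm rhat ≤ specNorm M⁻¹ * (H * eucNorm (Sη⁻¹ *ᵥ y)) := h6
      _ = H * specNorm M⁻¹ * eucNorm (Sη⁻¹ *ᵥ y) := by ring
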